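/- F(X,Y) = 1 if and only if X = Y as partitions (they have the same set of parts); that is, the F-measure attains its maximal value exactly when the estimated partition coincides with the reference partition. -/
import Mathlib


open Finset

/-- The purity of a part `x` with respect to the partition `Y`:
`Pur(x, Y) = max_j |x ∩ y_j| / |x|`. -/
noncomputable def partPurity {α : Type*} [DecidableEq α] {s : Finset α}
    (x : Finset α) (Y : Finpartition s) : ℝ :=
  ((Y.parts.sup fun y => (x ∩ y).card : ℕ) : ℝ) / (x.card : ℝ)

/-- The total purity of the partition `X` with respect to the partition `Y`:
`Pur(X, Y) = Σ_i (|x_i| / n) · Pur(x_i, Y)`. -/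
noncomputable def purity {α : Type*} [DecidableEq α] {s : Finset α}
    (X Y : Finpartition s) : ℝ :=
  ∑ x ∈ X.parts, ((x.card : ℝ) / (s.card : ℝ)) * partPurity x Y

/-- The F-measure: harmonic mean of the purity and the inverse purity. -/
noncomputable def fMeasure {α : Type*} [DecidableEq α] {s : Finset α}
    (X Y : Finpartition s) : ℝ :=
  2 * purity X Y * purity Y X / (purity X Y + purity Y X)

section Aux

variable {α : Type*} [DecidableEq α] {s : Finset α}

lemma partPurity_le_one {x : Finset α} (hx : x.Nonempty) (Y : Finpartition s) :
    partPurity x Y ≤ 1 := by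
  rw [partPurity, div_le_one (by exact_mod_cast hx.card_pos)]
  exact_mod_cast Finset.sup_le fun y _ => Finset.card_le_card (Finset.inter_subset_left)

lemma partPurity_pos {x : Finset α} (X Y : Finpartition s) (hxX : x ∈ X.parts) :
    0 < partPurity x Y := by
  obtain ⟨a, ha⟩ := X.nonempty_of_mem_parts hxX
  obtain ⟨y, hy, hay⟩ := Y.exists_mem (X.le hxX ha)
  have h1 : 1 ≤ Y.parts.sup fun y => (x ∩ y).card :=
    le_trans (Finset.card_pos.2 ⟨a, Finset.mem_inter.2 ⟨ha, hay⟩⟩)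
      (Finset.le_sup (f := fun y => (x ∩ y).card) hy)
  have hxc : (0:ℝ) < x.card := by exact_mod_cast (X.nonempty_of_mem_parts hxX).card_pos
  exact div_pos (by exact_mod_cast h1) hxc

lemma partPurity_eq_one_iff {x : Finset α} (hs : s.Nonempty) (X Y : Finpartition s)
    (hxX : x ∈ X.parts) : partPurity x Y = 1 ↔ ∃ y ∈ Y.parts, x ⊆ y := by
  have hx := X.nonempty_of_mem_parts hxX
  have hxc : (0:ℝ) < x.card := by exact_mod_cast hx.card_pos
  rw [partPurity, div_eq_one_iff_eq (ne_of_gt hxc)]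
  constructor
  · intro h
    have hYne : Y.parts.Nonempty := Y.parts_nonempty hs.ne_empty
    obtain ⟨y, hy, hsup⟩ := Finset.exists_mem_eq_sup Y.parts hYne fun y => (x ∩ y).card
    have hnat : (Y.parts.sup fun y => (x ∩ y).card) = x.card := by exact_mod_cast h
    have hcard : (x ∩ y).card = x.card := by rw [← hsup]; exact hnat
    have heq : x ∩ y = x :=
      Finset.eq_of_subset_of_card_le Finset.inter_subset_left (le_of_eq hcard.symm)
    exact ⟨y, hy, Finset.inter_eq_left.1 heq⟩
  · rintro ⟨y, hy, hxy⟩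
    have h1 : x.card ≤ Y.parts.sup fun y => (x ∩ y).card := by
      have : x ∩ y = x := Finset.inter_eq_left.2 hxy
      calc x.card = (x ∩ y).card := by rw [this]
        _ ≤ _ := Finset.le_sup (f := fun y => (x ∩ y).card) hy
    have h2 : (Y.parts.sup fun y => (x ∩ y).card) ≤ x.card :=
      Finset.sup_le fun y _ => Finset.card_le_card (Finset.inter_subset_left)
    exact_mod_cast le_antisymm h2 h1

lemma purity_le_one (hs : s.Nonempty) (X Y : Finpartition s) : purity X Y ≤ 1 := by
  have hn : (0:ℝ) < s.card := by exact_mod_cast hs.card_pos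
  have : purity X Y ≤ ∑ x ∈ X.parts, ((x.card : ℝ) / (s.card : ℝ)) := by
    apply Finset.sum_le_sum
    intro x hx
    have := partPurity_le_one (X.nonempty_of_mem_parts hx) Y
    have hw : (0:ℝ) ≤ (x.card : ℝ) / (s.card : ℝ) := by positivity
    nlinarith [partPurity_pos X Y hx]
  calc purity X Y ≤ _ := this
    _ = 1 := by
      rw [← Finset.sum_div, div_eq_one_iff_eq (ne_of_gt hn)]
      exact_mod_cast X.sum_card_parts

lemma purity_pos (hs : s.Nonempty) (X Y : Finpartition s) : 0 < purity X Y := by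
  have hXne : X.parts.Nonempty := X.parts_nonempty hs.ne_empty
  apply Finset.sum_pos _ hXne
  intro x hx
  have hn : (0:ℝ) < s.card := by exact_mod_cast hs.card_pos
  have hxc : (0:ℝ) < x.card := by exact_mod_cast (X.nonempty_of_mem_parts hx).card_pos
  exact mul_pos (div_pos hxc hn) (partPurity_pos X Y hx)

lemma purity_eq_one_iff (hs : s.Nonempty) (X Y : Finpartition s) :
    purity X Y = 1 ↔ ∀ x ∈ X.parts, ∃ y ∈ Y.parts, x ⊆ y := by
  have hn : (0:ℝ) < s.card := by exact_mod_cast hs.card_pos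
  have hsum : ∑ x ∈ X.parts, ((x.card : ℝ) / (s.card : ℝ)) = 1 := by
    rw [← Finset.sum_div, div_eq_one_iff_eq (ne_of_gt hn)]
    exact_mod_cast X.sum_card_parts
  have hle : ∀ x ∈ X.parts, ((x.card : ℝ) / (s.card : ℝ)) * partPurity x Y ≤
      ((x.card : ℝ) / (s.card : ℝ)) := by
    intro x hx
    have h1 := partPurity_le_one (X.nonempty_of_mem_parts hx) Y
    have hw : (0:ℝ) ≤ (x.card : ℝ) / (s.card : ℝ) := by positivity
    nlinarith
  constructor
  · intro h x hx
    have := (Finset.sum_eq_sum_iff_of_le hle).1 (by rw [hsum]; exact h) x hx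
    have hwpos : (0:ℝ) < (x.card : ℝ) / (s.card : ℝ) := by
      have hxc : (0:ℝ) < x.card := by
        exact_mod_cast (X.nonempty_of_mem_parts hx).card_pos
      exact div_pos hxc hn
    have hpp : partPurity x Y = 1 := by
      have h' : (x.card : ℝ) / (s.card : ℝ) * partPurity x Y =
          (x.card : ℝ) / (s.card : ℝ) * 1 := by rw [mul_one]; exact this
      exact mul_left_cancel₀ (ne_of_gt hwpos) h'
    exact (partPurity_eq_one_iff hs X Y hx).1 hpp
  · intro h
    rw [purity, ← hsum]
    apply Finset.sum_congr rfl
    intro x hx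
    rw [(partPurity_eq_one_iff hs X Y hx).2 (h x hx), mul_one]

lemma eq_of_refines (X Y : Finpartition s)
    (hXY : ∀ x ∈ X.parts, ∃ y ∈ Y.parts, x ⊆ y)
    (hYX : ∀ y ∈ Y.parts, ∃ x ∈ X.parts, y ⊆ x) : X = Y := by
  have key : ∀ (P Q : Finpartition s),
      (∀ x ∈ P.parts, ∃ y ∈ Q.parts, x ⊆ y) →
      (∀ y ∈ Q.parts, ∃ x ∈ P.parts, y ⊆ x) →
      P.parts ⊆ Q.parts := by
    intro P Q hPQ hQP x hx
    obtain ⟨y, hy, hxy⟩ := hPQ x hx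
    obtain ⟨x', hx', hyx'⟩ := hQP y hy
    obtain ⟨a, ha⟩ := P.nonempty_of_mem_parts hx
    have hxx' : x = x' := P.eq_of_mem_parts hx hx' ha (hyx' (hxy ha))
    have : x = y := Finset.Subset.antisymm hxy (hxx' ▸ hyx')
    exact this ▸ hy
  exact Finpartition.ext (Finset.Subset.antisymm (key X Y hXY hYX) (key Y X hYX hXY))

end Aux

/-- `F(X,Y) = 1` if and only if `X = Y` as partitions (they have the
same set of parts). -/
theorem fMeasure_eq_one_iff_eq {α : Type*} [DecidableEq α] {s : Finset α}
    (hs : s.Nonempty) (X Y : Finpartition s) :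
    fMeasure X Y = 1 ↔ X = Y := by
  have haP := purity_pos hs X Y
  have hbP := purity_pos hs Y X
  have ha1 := purity_le_one hs X Y
  have hb1 := purity_le_one hs Y X
  set a := purity X Y with hadef
  set b := purity Y X with hbdef
  constructor
  · intro h
    rw [fMeasure, div_eq_one_iff_eq (by positivity : a + b ≠ 0)] at h
    have hab : a = 1 ∧ b = 1 := by
      constructor <;> nlinarith
    apply eq_of_refines X Y
    · exact (purity_eq_one_iff hs X Y).1 hab.1
    · exact (purity_eq_one_iff hs Y X).1 hab.2
  · rintro rfl
    have h1 : a = 1 := (purity_eq_one_iff hs X X).2 fun x hx => ⟨x, hx, le_refl x⟩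
    have h2 : b = 1 := (purity_eq_one_iff hs X X).2 fun x hx => ⟨x, hx, le_refl x⟩
    have hF : fMeasure X X = 2 * a * b / (a + b) := rfl
    rw [hF, h1, h2]
    norm_num
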